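/- Let H be an r-m-uniform hb-graph on Fin n (every hb-edge has m-cardinality r ≥ 1) with hb-edges e_1, …, e_p, and let A_H be its k̄-adjacency hypermatrix. Then for every vertex j : Fin n, Σ_{t : t(0) = j} A_H(t) = deg_m(j), i.e. the sum of the entries of A_H over all tuples whose first coordinate is j equals the m-degree Σ_k e_k(j) of the vertex j. -/

import Mathlib

open Finset

lemma fib_cons {n r : ℕ} (j : Fin n) (t' : Fin r → Fin n) (i : Fin n) :
    (univ.filter (fun s : Fin (r+1) => (Fin.cons j t' : Fin (r+1) → Fin n) s = i)).card
      = (if j = i then 1 else 0) + (univ.filter (fun s : Fin r => t' s = i)).card := by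
  rw [Finset.card_filter, Finset.card_filter, Fin.sum_univ_succ]
  simp

lemma card_fiber_eq {n r : ℕ} (e : Fin n → ℕ) (j : Fin n) (hj : e j ≠ 0) :
    (univ.filter (fun t : Fin (r+1) → Fin n =>
        (∀ i, (univ.filter (fun s => t s = i)).card = e i) ∧ t 0 = j)).card
      = (univ.filter (fun t' : Fin r → Fin n =>
        ∀ i, (univ.filter (fun s => t' s = i)).card = Function.update e j (e j - 1) i)).card := by
  refine Finset.card_nbij' (fun t => Fin.tail t)
    (fun t' => (Fin.cons j t' : Fin (r+1) → Fin n)) ?_ ?_ ?_ ?_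
  · intro t ht
    simp only [mem_coe, mem_filter, mem_univ, true_and] at ht ⊢
    obtain ⟨h1, h2⟩ := ht
    intro i
    have hc := fib_cons j (Fin.tail t) i
    rw [show Fin.cons j (Fin.tail t) = t by rw [← h2]; exact Fin.cons_self_tail t] at hc
    rw [h1 i] at hc
    rcases eq_or_ne i j with rfl | hij
    · simp only [Function.update_self]
      simp only [if_true, eq_self_iff_true] at hc
      omega
    · rw [Function.update_of_ne hij]
      rw [if_neg (Ne.symm hij)] at hc
      omega
  · intro t' ht'
    simp only [mem_coe, mem_filter, mem_univ, true_and] at ht' ⊢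
    refine ⟨fun i => ?_, Fin.cons_zero _ _⟩
    rw [fib_cons, ht' i]
    rcases eq_or_ne i j with rfl | hij
    · simp only [Function.update_self, if_true, eq_self_iff_true]
      omega
    · rw [Function.update_of_ne hij, if_neg (Ne.symm hij)]
      omega
  · intro t ht
    simp only [mem_coe, mem_filter, mem_univ, true_and] at ht
    rw [← ht.2]; exact Fin.cons_self_tail t
  · intro t' _; simp [Fin.tail_cons]

lemma card_fiber_zero {n r : ℕ} (e : Fin n → ℕ) (j : Fin n) (hj : e j = 0) :
    (univ.filter (fun t : Fin (r+1) → Fin n =>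
        (∀ i, (univ.filter (fun s => t s = i)).card = e i) ∧ t 0 = j)).card = 0 := by
  rw [Finset.card_eq_zero, Finset.eq_empty_iff_forall_notMem]
  intro t ht
  simp only [mem_filter, mem_univ, true_and] at ht
  obtain ⟨h1, h2⟩ := ht
  have : (0 : Fin (r+1)) ∈ univ.filter (fun s => t s = j) := by
    simp [h2]
  have hcard : (univ.filter (fun s : Fin (r+1) => t s = j)).card ≠ 0 :=
    Finset.card_ne_zero_of_mem this
  rw [h1 j, hj] at hcard
  exact hcard rfl

lemma sum_update_sub {n : ℕ} (e : Fin n → ℕ) (j : Fin n) (hj : e j ≠ 0) :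
    ∑ i, Function.update e j (e j - 1) i = (∑ i, e i) - 1 := by
  rw [Finset.sum_update_of_mem (mem_univ j), ← Finset.add_sum_erase univ e (mem_univ j)]
  simp only [Finset.sdiff_singleton_eq_erase]
  omega

lemma prod_update_fact {n : ℕ} (e : Fin n → ℕ) (j : Fin n) (hj : e j ≠ 0) :
    ∏ i, (e i).factorial = e j * ∏ i, (Function.update e j (e j - 1) i).factorial := by
  rw [← Finset.mul_prod_erase univ (fun i => (e i).factorial) (mem_univ j),
      ← Finset.mul_prod_erase univ (fun i => (Function.update e j (e j - 1) i).factorial)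
        (mem_univ j)]
  have h1 : ∏ i ∈ univ.erase j, (Function.update e j (e j - 1) i).factorial
      = ∏ i ∈ univ.erase j, (e i).factorial := by
    apply Finset.prod_congr rfl
    intro i hi
    rw [Function.update_of_ne (Finset.ne_of_mem_erase hi)]
  rw [h1, Function.update_self]
  obtain ⟨m, hm⟩ : ∃ m, e j = m + 1 := ⟨e j - 1, by omega⟩
  rw [hm]
  simp only [Nat.add_sub_cancel, Nat.factorial_succ]
  ring

lemma count_first_aux {n r : ℕ} (e : Fin n → ℕ) (h : ∑ i, e i = r + 1) (j : Fin n)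
    (IH : ∀ e' : Fin n → ℕ, ∑ i, e' i = r →
      (univ.filter (fun t : Fin r → Fin n =>
        ∀ i, (univ.filter (fun s => t s = i)).card = e' i)).card * ∏ i, (e' i).factorial
        = r.factorial) :
    (univ.filter (fun t : Fin (r+1) → Fin n =>
        (∀ i, (univ.filter (fun s => t s = i)).card = e i) ∧ t 0 = j)).card
      * ∏ i, (e i).factorial = e j * r.factorial := by
  rcases eq_or_ne (e j) 0 with hj | hj
  · rw [card_fiber_zero e j hj, hj]; ring
  · rw [card_fiber_eq e j hj, prod_update_fact e j hj]
    have hsum : ∑ i, Function.update e j (e j - 1) i = r := by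
      rw [sum_update_sub e j hj, h]
      omega
    rw [show ∀ a b c : ℕ, a * (b * c) = b * (a * c) from fun a b c => by ring,
        IH _ hsum]

lemma count_realize {n : ℕ} : ∀ (r : ℕ) (e : Fin n → ℕ), (∑ i, e i = r) →
    (univ.filter (fun t : Fin r → Fin n =>
      ∀ i, (univ.filter (fun s => t s = i)).card = e i)).card * ∏ i, (e i).factorial
      = r.factorial := by
  intro r
  induction r with
  | zero =>
    intro e h
    have he : ∀ i, e i = 0 := by
      intro i
      have := Finset.sum_eq_zero_iff.mp h
      exact this i (mem_univ i)
    have : (univ.filter (fun t : Fin 0 → Fin n =>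
        ∀ i, (univ.filter (fun s => t s = i)).card = e i)) = univ := by
      apply Finset.filter_true_of_mem
      intro t _ i
      simp [he i]
    rw [this]
    simp [he, Finset.prod_eq_one]
  | succ r IH =>
    intro e h
    have hcard : (univ.filter (fun t : Fin (r+1) → Fin n =>
        ∀ i, (univ.filter (fun s => t s = i)).card = e i)).card
        = ∑ j : Fin n, (univ.filter (fun t : Fin (r+1) → Fin n =>
            (∀ i, (univ.filter (fun s => t s = i)).card = e i) ∧ t 0 = j)).card := by
      rw [Finset.card_eq_sum_card_fiberwise (f := fun t => t 0) (t := univ)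
        (fun x _ => mem_univ _)]
      congr 1
      ext j
      rw [Finset.filter_filter]
    rw [hcard, Finset.sum_mul]
    have : ∀ j : Fin n, (univ.filter (fun t : Fin (r+1) → Fin n =>
        (∀ i, (univ.filter (fun s => t s = i)).card = e i) ∧ t 0 = j)).card
        * ∏ i, (e i).factorial = e j * r.factorial :=
      fun j => count_first_aux e h j IH
    rw [Finset.sum_congr rfl (fun j _ => this j), ← Finset.sum_mul, h, Nat.factorial_succ]

lemma count_first {n r : ℕ} (e : Fin n → ℕ) (h : ∑ i, e i = r + 1) (j : Fin n) :
    (univ.filter (fun t : Fin (r+1) → Fin n =>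
        (∀ i, (univ.filter (fun s => t s = i)).card = e i) ∧ t 0 = j)).card
      * ∏ i, (e i).factorial = e j * r.factorial :=
  count_first_aux e h j (fun e' h' => count_realize r e' h')

theorem stmt6 (n p r : ℕ) (hr : 1 ≤ r) (e : Fin p → Fin n → ℕ)
    (hunif : ∀ k, ∑ j, e k j = r) (j : Fin n) :
    ∑ t ∈ Finset.univ.filter (fun t : Fin r → Fin n => t ⟨0, hr⟩ = j),
        (∑ k, if ∀ i, (Finset.univ.filter (fun s => t s = i)).card = e k i
              then ((∏ i, (e k i).factorial : ℕ) : ℝ) / (r - 1).factorial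
              else 0)
      = ∑ k, (e k j : ℝ) := by
  obtain ⟨r', rfl⟩ : ∃ r', r = r' + 1 := ⟨r - 1, by omega⟩
  rw [Finset.sum_comm]
  apply Finset.sum_congr rfl
  intro k _
  have key := count_first (e k) (hunif k) j
  have h0 : (⟨0, hr⟩ : Fin (r' + 1)) = 0 := rfl
  have step : ∑ t ∈ Finset.univ.filter (fun t : Fin (r'+1) → Fin n => t ⟨0, hr⟩ = j),
      (if ∀ i, (Finset.univ.filter (fun s => t s = i)).card = e k i
        then ((∏ i, (e k i).factorial : ℕ) : ℝ) / (r' + 1 - 1).factorial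
        else 0)
      = ((univ.filter (fun t : Fin (r'+1) → Fin n =>
          (∀ i, (univ.filter (fun s => t s = i)).card = e k i) ∧ t 0 = j)).card : ℝ)
        * (((∏ i, (e k i).factorial : ℕ) : ℝ) / (r' + 1 - 1).factorial) := by
    rw [Finset.sum_filter]
    rw [show (univ.filter (fun t : Fin (r'+1) → Fin n =>
          (∀ i, (univ.filter (fun s => t s = i)).card = e k i) ∧ t 0 = j))
        = univ.filter (fun t : Fin (r'+1) → Fin n =>
          t ⟨0, hr⟩ = j ∧ ∀ i, (univ.filter (fun s => t s = i)).card = e k i) by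
      apply Finset.filter_congr; intro t _; rw [h0]; tauto]
    rw [← Finset.sum_filter, ← Finset.sum_filter, Finset.filter_filter,
        Finset.sum_const, nsmul_eq_mul]
  rw [step]
  have hfac : ((r' + 1 - 1).factorial : ℝ) ≠ 0 := by
    simp [Nat.factorial_ne_zero]
  simp only [Nat.add_sub_cancel] at key hfac ⊢
  have keyR : ((univ.filter (fun t : Fin (r'+1) → Fin n =>
      (∀ i, (univ.filter (fun s => t s = i)).card = e k i) ∧ t 0 = j)).card : ℝ)
      * ((∏ i, (e k i).factorial : ℕ) : ℝ) = (e k j : ℝ) * (r'.factorial : ℝ) := by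
    exact_mod_cast congrArg (Nat.cast : ℕ → ℝ) key
  push_cast at keyR ⊢
  field_simp
  linarith [keyR]
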